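/- Let F be a field and M : Matrix (Fin n) (Fin n) F with n ≥ 1. Suppose M is NOT structurally full rank, i.e. every matrix N : Matrix (Fin n) (Fin n) F satisfying N i j = 0 whenever M i j = 0 has det N = 0. Then there exist a natural number k with 1 ≤ k ≤ n and permutations σ, τ of Fin n such that the permuted matrix M' defined by M' i j = M (σ i) (τ j) has a zero block occupying its first k rows and its last n − k + 1 columns, i.e. M (σ i) (τ j) = 0 for all i, j with (i : ℕ) < k and (j : ℕ) ≥ k − 1 (so the top-left block of M' has k rows and only k − 1 columns). -/

import Mathlib

open Finset

/-- If two finsets of a fintype have equal cardinality, there is a permutation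
carrying one exactly onto the other. -/
lemma exists_perm_mem_iff {α : Type*} [Fintype α] [DecidableEq α]
    {s t : Finset α} (h : s.card = t.card) :
    ∃ σ : Equiv.Perm α, ∀ x, x ∈ s ↔ σ x ∈ t := by
  classical
  have hc : sᶜ.card = tᶜ.card := by
    rw [Finset.card_compl, Finset.card_compl, h]
  let e1 : {x // x ∈ s} ≃ {x // x ∈ t} := Finset.equivOfCardEq h
  let e2' : {x // x ∈ sᶜ} ≃ {x // x ∈ tᶜ} := Finset.equivOfCardEq hc
  let e2 : {x // ¬ x ∈ s} ≃ {x // ¬ x ∈ t} :=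
    ((Equiv.subtypeEquivRight (fun x => by simp)).trans e2').trans
      (Equiv.subtypeEquivRight (fun x => by simp))
  let σ : Equiv.Perm α :=
    ((Equiv.sumCompl (· ∈ s)).symm.trans
      (Equiv.sumCongr e1 e2)).trans (Equiv.sumCompl (· ∈ t))
  refine ⟨σ, fun x => ?_⟩
  by_cases hx : x ∈ s
  · have : σ x = (e1 ⟨x, hx⟩ : α) := by
      simp only [σ, Equiv.trans_apply, Equiv.sumCompl_symm_apply_of_pos (h := hx),
        Equiv.sumCongr_apply, Sum.map_inl, Equiv.sumCompl_apply_inl]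
    rw [this]
    exact ⟨fun _ => (e1 ⟨x, hx⟩).2, fun _ => hx⟩
  · have : σ x = (e2 ⟨x, hx⟩ : α) := by
      simp only [σ, Equiv.trans_apply, Equiv.sumCompl_symm_apply_of_neg (h := hx),
        Equiv.sumCongr_apply, Sum.map_inr, Equiv.sumCompl_apply_inr]
    rw [this]
    exact ⟨fun hx' => absurd hx' hx, fun ht => absurd ht (e2 ⟨x, hx⟩).2⟩

lemma card_filter_coe_lt (n k : ℕ) (hk : k ≤ n) :
    (Finset.univ.filter (fun i : Fin n => (i : ℕ) < k)).card = k := by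
  classical
  have : Finset.univ.filter (fun i : Fin n => (i : ℕ) < k)
      = Finset.map (Fin.castLEEmb hk) Finset.univ := by
    ext i
    simp only [Finset.mem_filter, Finset.mem_univ, true_and, Finset.mem_map]
    constructor
    · intro hi
      exact ⟨⟨i, hi⟩, rfl⟩
    · rintro ⟨j, -, rfl⟩
      simp [j.2]
  rw [this, Finset.card_map, Finset.card_univ, Fintype.card_fin]

/-- If a square matrix `M` is not structurally full rank (every matrix with the
same zero pattern has zero determinant), then `M` can be row- and
column-permuted so that a zero block occupies the first `k` rows and the last
`n - k + 1` columns, for some `1 ≤ k ≤ n`. -/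
theorem stmt5 {F : Type*} [Field F] {n : ℕ} (hn : 1 ≤ n)
    (M : Matrix (Fin n) (Fin n) F)
    (h : ∀ N : Matrix (Fin n) (Fin n) F,
      (∀ i j, M i j = 0 → N i j = 0) → N.det = 0) :
    ∃ k : ℕ, 1 ≤ k ∧ k ≤ n ∧
      ∃ σ τ : Equiv.Perm (Fin n),
        ∀ i j : Fin n, (i : ℕ) < k → k - 1 ≤ (j : ℕ) → M (σ i) (τ j) = 0 := by
  classical
  -- no injective transversal of nonzero entries
  have hnof : ¬ ∃ f : Fin n → Fin n, Function.Injective f ∧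
      ∀ x, f x ∈ Finset.univ.filter (fun j => M x j ≠ 0) := by
    rintro ⟨f, hfinj, hf⟩
    have hfbij : Function.Bijective f := Finite.injective_iff_bijective.mp hfinj
    let π : Equiv.Perm (Fin n) := Equiv.ofBijective f hfbij
    have hdet := h (π.permMatrix F) (fun i j hij => by
      have hne : π i ≠ j := fun e =>
        (Finset.mem_filter.mp (hf i)).2 (by rw [← e] at hij; exact hij)
      simp [Equiv.Perm.permMatrix, PEquiv.toMatrix_apply,
        Equiv.toPEquiv_apply, Option.mem_def, hne])
    rw [Matrix.det_permutation] at hdet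
    rcases Int.units_eq_one_or (Equiv.Perm.sign π) with hs | hs <;>
      rw [hs] at hdet <;> simp at hdet
  -- Hall's theorem gives a deficient set A
  rw [← Finset.all_card_le_biUnion_card_iff_exists_injective
    (fun x : Fin n => Finset.univ.filter (fun j => M x j ≠ 0))] at hnof
  push_neg at hnof
  obtain ⟨A, hA⟩ := hnof
  set T := A.biUnion (fun x => Finset.univ.filter (fun j => M x j ≠ 0)) with hT
  set k := A.card with hkdef
  have hk1 : 1 ≤ k := by
    by_contra hk
    push_neg at hk
    interval_cases k
    omega
  have hkn : k ≤ n := by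
    simpa using Finset.card_le_card (A.subset_univ)
  have hTcard : T.card ≤ k - 1 := by omega
  -- pad T to a set of size k - 1
  obtain ⟨T', hTT', hT'card⟩ := Finset.exists_superset_card_eq hTcard
    (by simp; omega)
  refine ⟨k, hk1, hkn, ?_⟩
  have hs1 : (Finset.univ.filter (fun i : Fin n => (i : ℕ) < k)).card = A.card :=
    card_filter_coe_lt n k hkn
  have hs2 : (Finset.univ.filter (fun j : Fin n => (j : ℕ) < k - 1)).card = T'.card := by
    rw [hT'card]; exact card_filter_coe_lt n (k - 1) (by omega)
  obtain ⟨σ, hσ⟩ := exists_perm_mem_iff hs1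
  obtain ⟨τ, hτ⟩ := exists_perm_mem_iff hs2
  refine ⟨σ, τ, fun i j hi hj => ?_⟩
  have hσi : σ i ∈ A := (hσ i).mp (by simp [hi])
  have hτj : τ j ∉ T' := by
    intro hmem
    have : j ∈ Finset.univ.filter (fun j : Fin n => (j : ℕ) < k - 1) :=
      (hτ j).mpr hmem
    simp at this
    omega
  have hτj' : τ j ∉ T := fun hmem => hτj (hTT' hmem)
  by_contra hM
  exact hτj' (Finset.mem_biUnion.mpr ⟨σ i, hσi, by simp [hM]⟩)
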